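/- Assume the Continuum Hypothesis. Then there exists a compact, separable Hausdorff space which is van der Waerden but not Hindman. -/

import Mathlib

open Set Filter

/-- `A` contains arithmetic progressions of all finite lengths. -/
def IsAPSet (A : Set ℕ) : Prop :=
  ∀ k : ℕ, ∃ a d : ℕ, 0 < d ∧ ∀ i < k, a + i * d ∈ A

/-- The set of finite sums of distinct elements of `B`. -/
def FS (B : Set ℕ) : Set ℕ :=
  {n | ∃ F : Finset ℕ, F.Nonempty ∧ ↑F ⊆ B ∧ n = ∑ i ∈ F, i}

/-- `S` is an IP-set: it contains `FS B` for some infinite `B`. -/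
def IsIPSet (S : Set ℕ) : Prop :=
  ∃ B : Set ℕ, B.Infinite ∧ FS B ⊆ S

/-- `f` is finite-to-one on `C`. -/
def FinToOneOn (f : ℕ → ℕ) (C : Set ℕ) : Prop :=
  ∀ m : ℕ, (C ∩ f ⁻¹' {m}).Finite

/-- The Continuum Hypothesis. -/
def ContinuumHypothesis : Prop := Cardinal.aleph 1 = Cardinal.continuum.{0}

/-- `X` is a van der Waerden space. -/
def IsVanDerWaerdenSpace (X : Type*) [TopologicalSpace X] : Prop :=
  ∀ x : ℕ → X, ∃ A : Set ℕ, IsAPSet A ∧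
    ∃ q : X, ∀ U ∈ nhds q, {n ∈ A | x n ∉ U}.Finite

/-- `X` is a Hindman space. -/
def IsHindmanSpace (X : Type*) [TopologicalSpace X] : Prop :=
  ∀ x : ℕ → X, ∃ B : Set ℕ, B.Infinite ∧
    ∃ q : X, ∀ U ∈ nhds q, ∃ n₀ : ℕ, ∀ m ∈ FS (B \ {k | k < n₀}), x m ∈ U

namespace KS

/-- `A` contains an AP of length `k`. -/
def HasAP (A : Set ℕ) (k : ℕ) : Prop := ∃ a d : ℕ, 0 < d ∧ ∀ i < k, a + i * d ∈ A

lemma HasAP.mono {A B : Set ℕ} (h : A ⊆ B) {k : ℕ} : HasAP A k → HasAP B k := by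
  rintro ⟨a, d, hd, hm⟩; exact ⟨a, d, hd, fun i hi => h (hm i hi)⟩

lemma HasAP.of_le {A : Set ℕ} {k l : ℕ} (hkl : k ≤ l) : HasAP A l → HasAP A k := by
  rintro ⟨a, d, hd, hm⟩; exact ⟨a, d, hd, fun i hi => hm i (lt_of_lt_of_le hi hkl)⟩

lemma isAPSet_iff {A : Set ℕ} : IsAPSet A ↔ ∀ k, HasAP A k := Iff.rfl

lemma isAPSet_mono {A B : Set ℕ} (h : A ⊆ B) (hA : IsAPSet A) : IsAPSet B :=
  fun k => HasAP.mono h (hA k)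

lemma isAPSet_exists_high {A : Set ℕ} (hA : IsAPSet A) (k m : ℕ) :
    ∃ a d : ℕ, 0 < d ∧ m < a ∧ ∀ i < k, a + i * d ∈ A := by
  obtain ⟨a, d, hd, h⟩ := hA (k + m + 1)
  refine ⟨a + (m + 1) * d, d, hd, ?_, fun i hi => ?_⟩
  · have : (m + 1) * 1 ≤ (m + 1) * d := Nat.mul_le_mul_left _ hd
    omega
  · have := h (m + 1 + i) (by omega)
    have heq : a + (m + 1 + i) * d = a + (m + 1) * d + i * d := by ring
    rwa [heq] at this

lemma isAPSet_diff_finite {A F : Set ℕ} (hA : IsAPSet A) (hF : F.Finite) :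
    IsAPSet (A \ F) := by
  intro k
  obtain ⟨m, hm⟩ := hF.bddAbove
  obtain ⟨a, d, hd, hma, h⟩ := isAPSet_exists_high hA k m
  refine ⟨a, d, hd, fun i hi => ⟨h i hi, fun hmem => ?_⟩⟩
  have := hm hmem
  omega

lemma isAPSet_infinite {A : Set ℕ} (hA : IsAPSet A) : A.Infinite := by
  apply Set.infinite_of_not_bddAbove
  rintro ⟨m, hm⟩
  obtain ⟨a, d, hd, hma, h⟩ := isAPSet_exists_high hA 1 m
  have := hm (h 0 (by norm_num))
  simp at this
  omega

lemma isAPSet_univ : IsAPSet (univ : Set ℕ) := fun _ => ⟨0, 1, one_pos, fun _ _ => trivial⟩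

/-- Finite van der Waerden from Hales–Jewett: relative cover version, single length. -/
lemma exists_hasAP_of_cover {M k : ℕ} {A : Set ℕ} (S : Fin M → Set ℕ) (hA : IsAPSet A)
    (hcov : ∀ n ∈ A, ∃ i, n ∈ S i) : ∃ i, HasAP (S i) k := by
  classical
  rcases Nat.eq_zero_or_pos k with hk | hk
  · obtain ⟨a, d, hd, h⟩ := hA 1
    obtain ⟨i, _⟩ := hcov _ (h 0 (by norm_num))
    exact ⟨i, 0, 1, one_pos, fun t ht => by omega⟩
  obtain ⟨ι, hι, hHJ⟩ := Combinatorics.Line.exists_mono_in_high_dimension (Fin k) (Fin M)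
  obtain ⟨a, d, hd, hAP⟩ := hA (Fintype.card ι * (k - 1) + 1)
  have key : ∀ w : ι → Fin k, ∃ i : Fin M, a + (∑ j, ((w j : ℕ))) * d ∈ S i := by
    intro w
    apply hcov
    apply hAP
    have : ∑ j, ((w j : ℕ)) ≤ ∑ _j : ι, (k - 1) :=
      Finset.sum_le_sum fun j _ => by have := (w j).isLt; omega
    simp only [Finset.sum_const, Finset.card_univ, smul_eq_mul] at this
    omega
  choose C hC using key
  obtain ⟨l, c, hl⟩ := hHJ C
  set s : Finset ι := Finset.univ.filter (fun i => l.idxFun i = none) with hs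
  have hscard : 0 < s.card := by
    refine Finset.card_pos.mpr ⟨l.proper.choose, ?_⟩
    simp [hs, l.proper.choose_spec]
  refine ⟨c, a + (∑ i ∈ sᶜ, ((l.idxFun i).map (fun (y : Fin k) => (y : ℕ))).getD 0) * d,
    s.card * d, by positivity, fun t ht => ?_⟩
  set b : ℕ := ∑ i ∈ sᶜ, ((l.idxFun i).map (fun (y : Fin k) => (y : ℕ))).getD 0 with hb
  have hsum : (∑ j, ((l ⟨t, ht⟩ j : ℕ))) = b + s.card * t := by
    rw [← Finset.sum_add_sum_compl s]
    have h1 : ∑ i ∈ s, ((l ⟨t, ht⟩ i : ℕ)) = s.card * t := by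
      rw [Finset.sum_congr rfl (g := fun _ => (t : ℕ)) ?_]
      · simp [Finset.sum_const, mul_comm]
      · intro i hi
        rw [hs, Finset.mem_filter] at hi
        rw [Combinatorics.Line.coe_apply, hi.2]
        rfl
    have h2 : ∑ i ∈ sᶜ, ((l ⟨t, ht⟩ i : ℕ)) = b := by
      rw [hb]
      refine Finset.sum_congr rfl fun i hi => ?_
      rw [hs, Finset.compl_filter, Finset.mem_filter] at hi
      obtain ⟨y, hy⟩ := Option.ne_none_iff_exists.mp hi.2
      rw [Combinatorics.Line.coe_apply, ← hy]
      rfl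
    rw [h1, h2, Nat.add_comm]
  have hmem := hC (l ⟨t, ht⟩)
  rw [hl ⟨t, ht⟩] at hmem
  rw [hsum] at hmem
  have heq : a + (b + s.card * t) * d = a + b * d + t * (s.card * d) := by ring
  rwa [heq] at hmem

/-- Partition regularity of AP-sets. -/
lemma exists_isAPSet_of_cover {M : ℕ} {A : Set ℕ} (S : Fin M → Set ℕ) (hA : IsAPSet A)
    (hcov : ∀ n ∈ A, ∃ i, n ∈ S i) : ∃ i, IsAPSet (S i) := by
  by_contra h
  push_neg at h
  have h' : ∀ i, ∃ k, ¬ HasAP (S i) k := by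
    intro i
    by_contra hc
    push_neg at hc
    exact h i hc
  choose K hK using h'
  obtain ⟨i, hi⟩ := exists_hasAP_of_cover (k := Finset.univ.sup K) S hA hcov
  exact hK i (hi.of_le (Finset.le_sup (Finset.mem_univ i)))

end KS

namespace KS

/-- Generic recursion-with-choice helper. -/
lemma nat_rec_choice {α : Type*} (init : α) (R : ℕ → α → α → Prop)
    (h : ∀ j x, ∃ y, R j x y) :
    ∃ f : ℕ → α, f 0 = init ∧ ∀ j, R j (f j) (f (j + 1)) := by
  choose F hF using h
  exact ⟨fun n => Nat.rec init (fun j x => F j x) n, rfl, fun j => hF j _⟩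

/-- Selectivity of the AP coideal. -/
lemma selective {A : Set ℕ} (hA : IsAPSet A) (E : ℕ → Set ℕ) (hE : ∀ k, ¬ IsAPSet (E k)) :
    ∃ B : Set ℕ, B ⊆ A ∧ IsAPSet B ∧ ∀ k, (B ∩ E k).Finite := by
  classical
  have hRest : ∀ j : ℕ, IsAPSet (A \ ⋃ k ∈ Set.Iio j, E k) := by
    intro j
    have hcov : ∀ n ∈ A, ∃ i : Fin (j + 1),
        n ∈ (fun i : Fin (j + 1) => if h : (i : ℕ) < j then E i ∩ A else A \ ⋃ k ∈ Set.Iio j, E k) i := by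
      intro n hn
      by_cases hcase : ∃ k < j, n ∈ E k
      · obtain ⟨k, hk, hmem⟩ := hcase
        exact ⟨⟨k, by omega⟩, by simp [hk, hmem, hn]⟩
      · refine ⟨⟨j, by omega⟩, ?_⟩
        push_neg at hcase
        simp only [lt_irrefl, dif_neg]
        exact ⟨hn, by simpa using fun k hk => hcase k hk⟩
    obtain ⟨i, hi⟩ := exists_isAPSet_of_cover _ hA hcov
    by_cases hij : (i : ℕ) < j
    · rw [dif_pos hij] at hi
      exact absurd (isAPSet_mono Set.inter_subset_left hi) (hE i)
    · rwa [dif_neg hij] at hi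
  have hstep : ∀ j : ℕ, ∃ p : ℕ × ℕ, 0 < p.2 ∧ ∀ i < j, p.1 + i * p.2 ∈ A \ ⋃ k ∈ Set.Iio j, E k :=
    fun j => by obtain ⟨a, d, hd, h⟩ := hRest j j; exact ⟨(a, d), hd, h⟩
  choose P hP using hstep
  refine ⟨{n | ∃ j, ∃ i < j, n = (P j).1 + i * (P j).2}, ?_, ?_, ?_⟩
  · rintro n ⟨j, i, hi, rfl⟩
    exact ((hP j).2 i hi).1
  · intro k
    exact ⟨(P k).1, (P k).2, (hP k).1, fun i hi => ⟨k, i, hi, rfl⟩⟩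
  · intro k
    have hsub : {n | ∃ j, ∃ i < j, n = (P j).1 + i * (P j).2} ∩ E k ⊆
        (fun p : ℕ × ℕ => (P p.1).1 + p.2 * (P p.1).2) '' (Set.Iic k ×ˢ Set.Iic k) := by
      rintro n ⟨⟨j, i, hi, rfl⟩, hnE⟩
      have hjk : j ≤ k := by
        by_contra hjk
        push_neg at hjk
        have := ((hP j).2 i hi).2
        simp only [Set.mem_iUnion, Set.mem_Iio] at this
        exact this ⟨k, hjk, hnE⟩
      exact ⟨(j, i), ⟨Set.mem_Iic.mpr hjk, Set.mem_Iic.mpr (by omega)⟩, rfl⟩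
    exact (((Set.finite_Iic k).prod (Set.finite_Iic k)).image _).subset hsub

lemma mem_FS_single {B : Set ℕ} {b : ℕ} (hb : b ∈ B) : b ∈ FS B :=
  ⟨{b}, Finset.singleton_nonempty b, by simpa using hb, by simp⟩

lemma mem_FS_pair {B : Set ℕ} {b b' : ℕ} (hb : b ∈ B) (hb' : b' ∈ B) (hne : b ≠ b') :
    b + b' ∈ FS B := by
  refine ⟨{b, b'}, ⟨b, by simp⟩, ?_, by rw [Finset.sum_pair hne]⟩
  intro x hx
  simp only [Finset.coe_insert, Finset.coe_singleton, Set.mem_insert_iff,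
    Set.mem_singleton_iff] at hx
  rcases hx with rfl | rfl <;> assumption

lemma not_isIPSet_of_sum {T : Set ℕ} (h : ∀ x ∈ T, ∀ y ∈ T, x < y → x + y ∉ T) :
    ¬ IsIPSet T := by
  rintro ⟨D, hD, hFS⟩
  obtain ⟨x, hx⟩ := hD.nonempty
  obtain ⟨y, hy, hxy⟩ := hD.exists_gt x
  exact h x (hFS (mem_FS_single hx)) y (hFS (mem_FS_single hy)) hxy
    (hFS (mem_FS_pair hx hy (Nat.ne_of_lt hxy)))

lemma exists_sparse {S : Set ℕ} (hS : S.Infinite) :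
    ∃ T : Set ℕ, T ⊆ S ∧ T.Infinite ∧ ¬ IsIPSet T := by
  obtain ⟨t0, ht0S, ht0pos⟩ := hS.exists_gt 0
  obtain ⟨t, ht0, htstep⟩ := nat_rec_choice t0
    (fun _ x y => y ∈ S ∧ 2 * x < y)
    (fun _ x => by obtain ⟨y, hy, hxy⟩ := hS.exists_gt (2 * x); exact ⟨y, hy, hxy⟩)
  have htS : ∀ j, t j ∈ S := by
    intro j
    cases j with
    | zero => rw [ht0]; exact ht0S
    | succ j => exact (htstep j).1
  have hmono : StrictMono t := strictMono_nat_of_lt_succ fun j => by have := (htstep j).2; omega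
  refine ⟨Set.range t, by rintro n ⟨j, rfl⟩; exact htS j, Set.infinite_range_of_injective hmono.injective, ?_⟩
  apply not_isIPSet_of_sum
  rintro x ⟨i, rfl⟩ y ⟨j, rfl⟩ hlt ⟨k, hk⟩
  have hpos : 0 < t i := by
    have h0 : t 0 ≤ t i := hmono.monotone (Nat.zero_le i)
    rw [ht0] at h0
    omega
  have hjk : j < k := hmono.lt_iff_lt.mp (by omega)
  have h1 : t (j + 1) ≤ t k := hmono.monotone hjk
  have h2 := (htstep j).2
  omega

/-- Step lemma for the main construction: high-value, congruent blocks. -/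
lemma step_lemma {C : Set ℕ} {g : ℕ → ℕ} (hC : IsAPSet C) (hg : FinToOneOn g C) (j M : ℕ) :
    ∃ a d : ℕ, 0 < d ∧ (∀ i < j, a + i * d ∈ C ∧ 2 * M < g (a + i * d)) ∧
      ∀ i < j, ∀ i' < j, g (a + i * d) % (M + 1) = g (a + i' * d) % (M + 1) := by
  classical
  have hfin : ({n ∈ C | g n ≤ 2 * M}).Finite := by
    refine (((Set.finite_Iic (2 * M)).biUnion (fun v _ => hg v)).subset ?_)
    rintro n ⟨hnC, hv⟩
    exact Set.mem_biUnion hv ⟨hnC, rfl⟩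
  have hA : IsAPSet {n ∈ C | 2 * M < g n} := by
    refine isAPSet_mono ?_ (isAPSet_diff_finite hC hfin)
    rintro n ⟨hnC, hn⟩
    simp only [Set.mem_setOf_eq, not_and, not_le] at hn
    exact ⟨hnC, hn hnC⟩
  obtain ⟨r, hr⟩ := exists_isAPSet_of_cover
    (fun r : Fin (M + 1) => {n ∈ {n ∈ C | 2 * M < g n} | g n % (M + 1) = (r : ℕ)}) hA
    (fun n hn => ⟨⟨g n % (M + 1), Nat.mod_lt _ (by omega)⟩, hn, rfl⟩)
  obtain ⟨a, d, hd, h⟩ := hr j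
  exact ⟨a, d, hd, fun i hi => (h i hi).1,
    fun i hi i' hi' => by rw [(h i hi).2, (h i' hi').2]⟩

end KS

namespace KS

/-- Main combinatorial lemma (Kojman–Shelah): if `g` is finite-to-one on an AP-set `C`,
then some AP-subset `B ⊆ C` has `g '' B` not an IP-set. -/
lemma main_lemma {C : Set ℕ} {g : ℕ → ℕ} (hC : IsAPSet C) (hg : FinToOneOn g C) :
    ∃ B : Set ℕ, B ⊆ C ∧ IsAPSet B ∧ ¬ IsIPSet (g '' B) := by
  classical
  obtain ⟨f, hf0, hfstep⟩ := nat_rec_choice (α := (ℕ × ℕ) × ℕ) ((0, 1), 1)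
    (fun j x y =>
      0 < y.1.2 ∧
      (∀ i < j + 1, y.1.1 + i * y.1.2 ∈ C ∧ 2 * x.2 < g (y.1.1 + i * y.1.2)) ∧
      (∀ i < j + 1, ∀ i' < j + 1,
        g (y.1.1 + i * y.1.2) % (x.2 + 1) = g (y.1.1 + i' * y.1.2) % (x.2 + 1)) ∧
      y.2 = max (x.2 + 1) ((Finset.range (j + 1)).sup (fun i => g (y.1.1 + i * y.1.2))))
    (fun j x => by
      obtain ⟨a, d, hd, h1, h2⟩ := step_lemma hC hg (j + 1) x.2
      exact ⟨((a, d), max (x.2 + 1) ((Finset.range (j + 1)).sup (fun i => g (a + i * d)))),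
        hd, h1, h2, rfl⟩)
  set a : ℕ → ℕ := fun j => (f j).1.1 with ha
  set d : ℕ → ℕ := fun j => (f j).1.2 with hd
  set Mt : ℕ → ℕ := fun j => (f j).2 with hMt
  have hdpos : ∀ j, 0 < d j := by
    intro j
    cases j with
    | zero => simp [hd, hf0]
    | succ j => exact (hfstep j).1
  have hmem : ∀ j, ∀ i < j, a j + i * d j ∈ C := by
    intro j
    cases j with
    | zero => omega
    | succ j => exact fun i hi => ((hfstep j).2.1 i hi).1
  have hlo : ∀ j, ∀ i < j + 1, 2 * Mt j < g (a (j + 1) + i * d (j + 1)) :=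
    fun j i hi => ((hfstep j).2.1 i hi).2
  have hmod : ∀ j, ∀ i < j + 1, ∀ i' < j + 1,
      g (a (j + 1) + i * d (j + 1)) % (Mt j + 1) = g (a (j + 1) + i' * d (j + 1)) % (Mt j + 1) :=
    fun j => (hfstep j).2.2.1
  have heqM : ∀ j, Mt (j + 1) = max (Mt j + 1)
      ((Finset.range (j + 1)).sup (fun i => g (a (j + 1) + i * d (j + 1)))) :=
    fun j => (hfstep j).2.2.2
  have hhi : ∀ j, ∀ i < j + 1, g (a (j + 1) + i * d (j + 1)) ≤ Mt (j + 1) := by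
    intro j i hi
    have hle : (fun i => g (a (j + 1) + i * d (j + 1))) i ≤
        (Finset.range (j + 1)).sup (fun i => g (a (j + 1) + i * d (j + 1))) :=
      Finset.le_sup (f := fun i => g (a (j + 1) + i * d (j + 1))) (Finset.mem_range.mpr hi)
    have h2 := le_max_right (Mt j + 1)
      ((Finset.range (j + 1)).sup (fun i => g (a (j + 1) + i * d (j + 1))))
    rw [← heqM j] at h2
    exact le_trans hle h2
  have hMt0 : Mt 0 = 1 := by simp [hMt, hf0]
  have hMtsucc : ∀ j, Mt j + 1 ≤ Mt (j + 1) := by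
    intro j
    have := le_max_left (Mt j + 1)
      ((Finset.range (j + 1)).sup (fun i => g (a (j + 1) + i * d (j + 1))))
    rw [← heqM j] at this
    exact this
  have hMtmono : Monotone Mt := monotone_nat_of_le_succ fun j => by have := hMtsucc j; omega
  have hMtpos : ∀ j, 1 ≤ Mt j := fun j => hMt0 ▸ hMtmono (Nat.zero_le j)
  refine ⟨{n | ∃ j, ∃ i < j, n = a j + i * d j}, ?_, ?_, ?_⟩
  · rintro n ⟨j, i, hi, rfl⟩
    exact hmem j i hi
  · exact fun k => ⟨a k, d k, hdpos k, fun i hi => ⟨k, i, hi, rfl⟩⟩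
  rintro ⟨D, hD, hFS⟩
  have hdecomp : ∀ m ∈ g '' {n | ∃ j, ∃ i < j, n = a j + i * d j},
      ∃ j i, i < j + 1 ∧ m = g (a (j + 1) + i * d (j + 1)) := by
    rintro m ⟨n, ⟨j, i, hi, rfl⟩, rfl⟩
    cases j with
    | zero => omega
    | succ j => exact ⟨j, i, hi, rfl⟩
  obtain ⟨d₁, hd₁D⟩ := hD.nonempty
  obtain ⟨j₁, i₁, hi₁, he₁⟩ := hdecomp d₁ (hFS (mem_FS_single hd₁D))
  have hd₁hi : d₁ ≤ Mt (j₁ + 1) := he₁ ▸ hhi j₁ i₁ hi₁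
  have hd₁lo : 2 * Mt j₁ < d₁ := he₁ ▸ hlo j₁ i₁ hi₁
  obtain ⟨d₂, hd₂D, hgt⟩ := hD.exists_gt (Mt (j₁ + 1))
  obtain ⟨j₂, i₂, hi₂, he₂⟩ := hdecomp d₂ (hFS (mem_FS_single hd₂D))
  have hd₂hi : d₂ ≤ Mt (j₂ + 1) := he₂ ▸ hhi j₂ i₂ hi₂
  have hd₂lo : 2 * Mt j₂ < d₂ := he₂ ▸ hlo j₂ i₂ hi₂
  have hj₁j₂ : j₁ + 1 ≤ j₂ := by
    by_contra hcon
    push_neg at hcon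
    have : Mt (j₂ + 1) ≤ Mt (j₁ + 1) := hMtmono (by omega)
    omega
  have hs : d₁ + d₂ ∈ FS D := mem_FS_pair hd₁D hd₂D (by omega)
  obtain ⟨j₃, i₃, hi₃, he₃⟩ := hdecomp (d₁ + d₂) (hFS hs)
  have hshi : d₁ + d₂ ≤ Mt (j₃ + 1) := he₃ ▸ hhi j₃ i₃ hi₃
  have hslo : 2 * Mt j₃ < d₁ + d₂ := he₃ ▸ hlo j₃ i₃ hi₃
  have hj₃ : j₃ = j₂ := by
    rcases lt_trichotomy j₃ j₂ with h | h | h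
    · have h1 : Mt (j₃ + 1) ≤ Mt j₂ := hMtmono (by omega)
      omega
    · exact h
    · have h1 : Mt (j₂ + 1) ≤ Mt j₃ := hMtmono (by omega)
      have h2 : Mt (j₁ + 1) ≤ Mt (j₂ + 1) := hMtmono (by omega)
      omega
  subst hj₃
  have hmodeq : g (a (j₃ + 1) + i₂ * d (j₃ + 1)) % (Mt j₃ + 1) =
      g (a (j₃ + 1) + i₃ * d (j₃ + 1)) % (Mt j₃ + 1) := hmod j₃ i₂ hi₂ i₃ hi₃
  rw [← he₂, ← he₃] at hmodeq
  have hdvd : (Mt j₃ + 1) ∣ d₁ := by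
    have h1 : d₂ ≡ d₁ + d₂ [MOD Mt j₃ + 1] := by
      unfold Nat.ModEq
      omega
    have h2 := (Nat.modEq_iff_dvd' (by omega)).mp h1
    simpa using h2
  have hle : Mt j₃ + 1 ≤ d₁ := Nat.le_of_dvd (by have := hMtpos j₁; omega) hdvd
  have : Mt (j₁ + 1) ≤ Mt j₃ := hMtmono hj₁j₂
  omega

end KS

namespace KS

lemma finToOneOn_mono {g : ℕ → ℕ} {B C : Set ℕ} (h : B ⊆ C) (hg : FinToOneOn g C) :
    FinToOneOn g B :=
  fun m => (hg m).subset (Set.inter_subset_inter_left _ h)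

/-- An initial almost disjoint family: `seedAt r = {2^(pair r n + 1)}`. -/
def seedAt (r : ℕ) : Set ℕ := Set.range (fun n => 2 ^ (Nat.pair r n + 1))

lemma seedAt_injOn : ∀ r, Function.Injective (fun n => 2 ^ (Nat.pair r n + 1)) := by
  intro r n n' h
  simp only at h
  have h1 := Nat.pow_right_injective (le_refl 2) h
  have h2 : Nat.pair r n = Nat.pair r n' := by omega
  exact (Nat.pair_eq_pair.mp h2).2

lemma seedAt_infinite (r : ℕ) : (seedAt r).Infinite :=
  Set.infinite_range_of_injective (seedAt_injOn r)

lemma pow_sum_not_pow {a b c : ℕ} (hab : 2 ^ a < 2 ^ b) : 2 ^ a + 2 ^ b ≠ 2 ^ c := by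
  intro h
  have ha : 0 < 2 ^ a := pow_pos (by norm_num) a
  have hb : 2 ^ b < 2 ^ c := by omega
  have hbc : b < c := (Nat.pow_lt_pow_iff_right (by omega)).mp hb
  have : 2 ^ (b + 1) ≤ 2 ^ c := Nat.pow_le_pow_right (by omega) (by omega)
  have h2 : 2 ^ (b + 1) = 2 ^ b + 2 ^ b := by ring
  omega

lemma seedAt_not_IP (r : ℕ) : ¬ IsIPSet (seedAt r) := by
  apply not_isIPSet_of_sum
  rintro x ⟨n, rfl⟩ y ⟨m, rfl⟩ hlt ⟨k, hk⟩
  exact pow_sum_not_pow hlt hk.symm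

lemma seedAt_disjoint {r r' : ℕ} (h : r ≠ r') : seedAt r ∩ seedAt r' = ∅ := by
  ext x
  simp only [Set.mem_inter_iff, Set.mem_empty_iff_false, iff_false, not_and]
  rintro ⟨n, rfl⟩ ⟨m, hm⟩
  have h1 := Nat.pow_right_injective (le_refl 2) hm
  have h2 : Nat.pair r' m = Nat.pair r n := by omega
  exact h (Nat.pair_eq_pair.mp h2).1.symm

lemma seedAt_injective : Function.Injective seedAt := by
  intro r r' h
  by_contra hne
  have h1 := seedAt_disjoint hne
  rw [h, Set.inter_self] at h1
  exact (seedAt_infinite r') (by rw [h1]; exact Set.finite_empty)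

def seeds : Set (Set ℕ) := Set.range seedAt

lemma seeds_infinite : seeds.Infinite := Set.infinite_range_of_injective seedAt_injective

lemma seeds_countable : seeds.Countable := Set.countable_range _

/-- Extension step for the transfinite construction. -/
lemma extend_family {ℱ : Set (Set ℕ)} (hcount : ℱ.Countable) (hne : ℱ.Nonempty)
    {g : ℕ → ℕ} {C : Set ℕ} (hC : IsAPSet C) (hg : FinToOneOn g C)
    (hno : ∀ A ∈ ℱ, ¬ IsAPSet {n ∈ C | g n ∈ A}) :
    ∃ A : Set ℕ, A.Infinite ∧ ¬ IsIPSet A ∧ IsAPSet {n ∈ C | g n ∈ A} ∧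
      ∀ A' ∈ ℱ, (A ∩ A').Finite := by
  classical
  obtain ⟨q, hq⟩ := hcount.exists_eq_range hne
  set E : ℕ → Set ℕ := fun k => {n ∈ C | g n ∈ q k ∧ ∀ i < k, g n ∉ q i} with hE
  have hEnotAP : ∀ k, ¬ IsAPSet (E k) := by
    intro k hk
    refine hno (q k) (by rw [hq]; exact ⟨k, rfl⟩) (isAPSet_mono ?_ hk)
    rintro n ⟨hnC, hnq, _⟩
    exact ⟨hnC, hnq⟩
  obtain ⟨B₀, hB₀C, hB₀AP, hB₀fin⟩ := selective hC E hEnotAP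
  obtain ⟨B, hBB₀, hBAP, hBnip⟩ := main_lemma hB₀AP (finToOneOn_mono hB₀C hg)
  have hBC : B ⊆ C := hBB₀.trans hB₀C
  refine ⟨g '' B, ?_, hBnip, ?_, ?_⟩
  · intro hfin
    have hBfin : B.Finite := by
      have hsub : B ⊆ ⋃ m ∈ g '' B, (C ∩ g ⁻¹' {m}) := by
        intro n hn
        exact Set.mem_biUnion (Set.mem_image_of_mem g hn) ⟨hBC hn, rfl⟩
      exact (hfin.biUnion (fun m _ => hg m)).subset hsub
    exact (isAPSet_infinite hBAP) hBfin
  · refine isAPSet_mono ?_ hBAP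
    intro n hn
    exact ⟨hBC hn, Set.mem_image_of_mem g hn⟩
  · intro A' hA'
    rw [hq] at hA'
    obtain ⟨k, rfl⟩ := hA'
    have hsub : g '' B ∩ q k ⊆ g '' (⋃ i ∈ Set.Iic k, (B₀ ∩ E i)) := by
      rintro m ⟨⟨n, hnB, rfl⟩, hmq⟩
      have hex : ∃ i, g n ∈ q i := ⟨k, hmq⟩
      have hfind := Nat.find_spec hex
      have hfindle : Nat.find hex ≤ k := Nat.find_le hmq
      refine Set.mem_image_of_mem g (Set.mem_biUnion (Set.mem_Iic.mpr hfindle) ?_)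
      exact ⟨hBB₀ hnB, hBC hnB, hfind, fun i hi => Nat.find_min hex hi⟩
    exact (((Set.finite_Iic k).biUnion (fun i _ => hB₀fin i)).image g).subset hsub

/-- Transfinite recursion with choice. -/
lemma wf_rec_choice {ι α : Type*} [LinearOrder ι] [WellFoundedLT ι] [Inhabited α]
    (R : ι → (ι → α) → α → Prop)
    (hR : ∀ t f f', (∀ s, s < t → f s = f' s) → ∀ y, R t f y → R t f' y)
    (h : ∀ t f, ∃ y, R t f y) :
    ∃ F : ι → α, ∀ t, R t F (F t) := by
  classical
  let G : ∀ t : ι, (∀ s, s < t → α) → α := fun t rec =>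
    Classical.choose (h t (fun s => if hs : s < t then rec s hs else default))
  let F : ι → α := fun t => (wellFounded_lt (α := ι)).fix G t
  have hFeq : ∀ t, F t = G t (fun s _ => F s) := fun t => WellFounded.fix_eq _ _ t
  refine ⟨F, fun t => ?_⟩
  have hspec := Classical.choose_spec (h t (fun s => if hs : s < t then F s else default))
  rw [hFeq t]
  exact hR t _ F (fun s hs => by simp [hs]) _ hspec

end KS

namespace KS

lemma seeds_mem_infinite : ∀ A ∈ seeds, A.Infinite := by
  rintro A ⟨r, rfl⟩; exact seedAt_infinite r

lemma seeds_mem_notIP : ∀ A ∈ seeds, ¬ IsIPSet A := by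
  rintro A ⟨r, rfl⟩; exact seedAt_not_IP r

lemma seeds_ad : ∀ A ∈ seeds, ∀ A' ∈ seeds, A ≠ A' → (A ∩ A').Finite := by
  rintro A ⟨r, rfl⟩ A' ⟨r', rfl⟩ hne
  have hrr : r ≠ r' := fun h => hne (by rw [h])
  rw [seedAt_disjoint hrr]
  exact Set.finite_empty

/-- The family accumulated strictly below `t`, together with the seeds. -/
def famB {ι : Type} [Preorder ι] (F : ι → Option (Set ℕ)) (t : ι) : Set (Set ℕ) :=
  seeds ∪ {A | ∃ s, s < t ∧ F s = some A}

lemma famB_congr {ι : Type} [Preorder ι] {F F' : ι → Option (Set ℕ)} {t : ι}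
    (h : ∀ s, s < t → F s = F' s) : famB F t = famB F' t := by
  unfold famB
  congr 1
  ext A
  constructor <;> rintro ⟨s, hs, hF⟩
  · exact ⟨s, hs, by rw [← h s hs]; exact hF⟩
  · exact ⟨s, hs, by rw [h s hs]; exact hF⟩

lemma famB_nonempty {ι : Type} [Preorder ι] (F : ι → Option (Set ℕ)) (t : ι) :
    (famB F t).Nonempty := ⟨seedAt 0, Or.inl ⟨0, rfl⟩⟩

lemma famB_countable {ι : Type} [Preorder ι] (F : ι → Option (Set ℕ)) (t : ι)
    (h : (Set.Iio t).Countable) : (famB F t).Countable := by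
  refine seeds_countable.union (((h.image (fun s => (F s).getD ∅))).mono ?_)
  rintro A ⟨s, hs, hF⟩
  exact ⟨s, hs, by simp only; rw [hF]; rfl⟩

/-- The single-step relation of the transfinite recursion. -/
def Rstep {ι : Type} [Preorder ι] (e : ((ℕ → ℕ) × Set ℕ ⊕ Set ℕ) ≃ ι) (t : ι)
    (F : ι → Option (Set ℕ)) (y : Option (Set ℕ)) : Prop :=
  (∀ A, y = some A → A.Infinite ∧ ¬ IsIPSet A ∧ ∀ A' ∈ famB F t, (A ∩ A').Finite) ∧
  (∀ g C, e.symm t = Sum.inl (g, C) → IsAPSet C → FinToOneOn g C →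
    (∀ A ∈ famB F t, ¬ IsAPSet {n ∈ C | g n ∈ A}) →
    ∃ A, y = some A ∧ IsAPSet {n ∈ C | g n ∈ A}) ∧
  (∀ S, e.symm t = Sum.inr S → S.Infinite → (∀ A ∈ famB F t, (S ∩ A).Finite) →
    ∃ A, y = some A ∧ A ⊆ S)

lemma exists_good_family (ch : ContinuumHypothesis) :
    ∃ 𝒜 : Set (Set ℕ),
      𝒜.Infinite ∧
      (∀ A ∈ 𝒜, A.Infinite) ∧
      (∀ A ∈ 𝒜, ¬ IsIPSet A) ∧
      (∀ A ∈ 𝒜, ∀ A' ∈ 𝒜, A ≠ A' → (A ∩ A').Finite) ∧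
      (∀ S : Set ℕ, S.Infinite → ∃ A ∈ 𝒜, (S ∩ A).Infinite) ∧
      (∀ (g : ℕ → ℕ) (C : Set ℕ), IsAPSet C → FinToOneOn g C →
        ∃ A ∈ 𝒜, IsAPSet {n ∈ C | g n ∈ A}) := by
  classical
  have hcard : Cardinal.mk ((ℕ → ℕ) × Set ℕ ⊕ Set ℕ) = Cardinal.continuum := by
    simp only [Cardinal.mk_sum, Cardinal.mk_prod, Cardinal.mk_set, Cardinal.mk_arrow,
      Cardinal.mk_nat, Cardinal.lift_id, Cardinal.lift_aleph0]
    rw [Cardinal.aleph0_power_aleph0, Cardinal.two_power_aleph0,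
      Cardinal.continuum_mul_self, Cardinal.continuum_add_self]
  have hcardO : Cardinal.mk (Cardinal.continuum.ord.ToType) = Cardinal.continuum :=
    Cardinal.mk_ord_toType _
  obtain ⟨e⟩ : Nonempty ((ℕ → ℕ) × Set ℕ ⊕ Set ℕ ≃ Cardinal.continuum.ord.ToType) :=
    Cardinal.eq.mp (hcard.trans hcardO.symm)
  have hIio : ∀ t : Cardinal.continuum.ord.ToType, (Set.Iio t).Countable := by
    intro t
    exact (Cardinal.countable_iff_lt_aleph_one _).mpr
      (by rw [ch]; exact Cardinal.mk_Iio_ord_toType t)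
  have hRmono : ∀ (t : Cardinal.continuum.ord.ToType) f f',
      (∀ s, s < t → f s = f' s) → ∀ y, Rstep e t f y → Rstep e t f' y := by
    intro t f f' hag y hy
    unfold Rstep at hy ⊢
    rw [← famB_congr hag]
    exact hy
  have hRex : ∀ (t : Cardinal.continuum.ord.ToType) f, ∃ y, Rstep e t f y := by
    intro t f
    rcases hsym : e.symm t with ⟨g, C⟩ | S
    · by_cases hcase : IsAPSet C ∧ FinToOneOn g C ∧ ∀ A ∈ famB f t, ¬ IsAPSet {n ∈ C | g n ∈ A}
      · obtain ⟨A, hAinf, hAnip, hAcatch, hAad⟩ :=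
          extend_family (famB_countable f t (hIio t)) (famB_nonempty f t)
            hcase.1 hcase.2.1 hcase.2.2
        refine ⟨some A, ?_, ?_, ?_⟩
        · rintro A' hA'
          rw [Option.some_inj] at hA'
          subst hA'
          exact ⟨hAinf, hAnip, hAad⟩
        · intro g' C' heq _ _ _
          rw [hsym] at heq
          rw [Sum.inl.injEq, Prod.mk.injEq] at heq
          obtain ⟨rfl, rfl⟩ := heq
          exact ⟨A, rfl, hAcatch⟩
        · intro S heq
          rw [hsym] at heq
          simp at heq
      · refine ⟨none, by simp, ?_, ?_⟩
        · intro g' C' heq h1 h2 h3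
          rw [hsym] at heq
          rw [Sum.inl.injEq, Prod.mk.injEq] at heq
          obtain ⟨rfl, rfl⟩ := heq
          exact absurd ⟨h1, h2, h3⟩ hcase
        · intro S heq
          rw [hsym] at heq
          simp at heq
    · by_cases hcase : S.Infinite ∧ ∀ A ∈ famB f t, (S ∩ A).Finite
      · obtain ⟨T, hTS, hTinf, hTnip⟩ := exists_sparse hcase.1
        refine ⟨some T, ?_, ?_, ?_⟩
        · rintro A hA
          rw [Option.some_inj] at hA
          subst hA
          exact ⟨hTinf, hTnip, fun A' hA' =>
            (hcase.2 A' hA').subset (Set.inter_subset_inter_left _ hTS)⟩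
        · intro g' C' heq
          rw [hsym] at heq
          simp at heq
        · intro S' heq _ _
          rw [hsym] at heq
          rw [Sum.inr.injEq] at heq
          subst heq
          exact ⟨T, rfl, hTS⟩
      · refine ⟨none, by simp, ?_, ?_⟩
        · intro g' C' heq
          rw [hsym] at heq
          simp at heq
        · intro S' heq h1 h2
          rw [hsym] at heq
          rw [Sum.inr.injEq] at heq
          subst heq
          exact absurd ⟨h1, h2⟩ hcase
  obtain ⟨F, hF⟩ := wf_rec_choice (Rstep e) hRmono hRex
  have hfamsub : ∀ t, famB F t ⊆ seeds ∪ {A | ∃ t, F t = some A} := by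
    intro t A hA
    rcases hA with hA | ⟨s, _, hs⟩
    · exact Or.inl hA
    · exact Or.inr ⟨s, hs⟩
  refine ⟨seeds ∪ {A | ∃ t, F t = some A}, ?_, ?_, ?_, ?_, ?_, ?_⟩
  · exact seeds_infinite.mono Set.subset_union_left
  · rintro A (hA | ⟨t, ht⟩)
    · exact seeds_mem_infinite A hA
    · exact ((hF t).1 A ht).1
  · rintro A (hA | ⟨t, ht⟩)
    · exact seeds_mem_notIP A hA
    · exact ((hF t).1 A ht).2.1
  · rintro A (hA | ⟨t, ht⟩) A' (hA' | ⟨t', ht'⟩) hne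
    · exact seeds_ad A hA A' hA' hne
    · rw [Set.inter_comm]
      exact ((hF t').1 A' ht').2.2 A (Or.inl hA)
    · exact ((hF t).1 A ht).2.2 A' (Or.inl hA')
    · rcases lt_trichotomy t t' with h | h | h
      · rw [Set.inter_comm]
        exact ((hF t').1 A' ht').2.2 A (Or.inr ⟨t, h, ht⟩)
      · subst h
        rw [ht] at ht'
        exact absurd (Option.some_inj.mp ht') hne
      · exact ((hF t).1 A ht).2.2 A' (Or.inr ⟨t', h, ht'⟩)
  · intro S hS
    by_cases hcase : ∀ A ∈ famB F (e (Sum.inr S)), (S ∩ A).Finite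
    · obtain ⟨A, hFA, hAS⟩ := (hF (e (Sum.inr S))).2.2 S (Equiv.symm_apply_apply e _) hS hcase
      refine ⟨A, Or.inr ⟨_, hFA⟩, ?_⟩
      have : A.Infinite := ((hF (e (Sum.inr S))).1 A hFA).1
      exact this.mono (Set.subset_inter hAS (le_refl A))
    · push_neg at hcase
      obtain ⟨A, hA, hinf⟩ := hcase
      exact ⟨A, hfamsub _ hA, fun h => hinf h⟩
  · intro g C hC hg
    by_cases hcase : ∀ A ∈ famB F (e (Sum.inl (g, C))), ¬ IsAPSet {n ∈ C | g n ∈ A}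
    · obtain ⟨A, hFA, hAcatch⟩ :=
        (hF (e (Sum.inl (g, C)))).2.1 g C (Equiv.symm_apply_apply e _) hC hg hcase
      exact ⟨A, Or.inr ⟨_, hFA⟩, hAcatch⟩
    · push_neg at hcase
      obtain ⟨A, hA, hcatch⟩ := hcase
      exact ⟨A, hfamsub _ hA, hcatch⟩

end KS

namespace KS

variable (𝒜 : Set (Set ℕ))

/-- Points of the space: `ℕ` (isolated), one point per member of `𝒜`, and a point at infinity. -/
abbrev Pt := Option (ℕ ⊕ {A // A ∈ 𝒜})

/-- Openness predicate of the Mrówka-style space with a point at infinity. -/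
def XOpen (U : Set (Pt 𝒜)) : Prop :=
  (∀ A : {A // A ∈ 𝒜}, some (Sum.inr A) ∈ U →
      (A.1 \ {n : ℕ | some (Sum.inl n) ∈ U}).Finite) ∧
  ((none : Pt 𝒜) ∈ U →
      {A : {A // A ∈ 𝒜} | some (Sum.inr A) ∉ U}.Finite ∧
      ({n : ℕ | some (Sum.inl n) ∉ U} \
        ⋃ A ∈ {A : {A // A ∈ 𝒜} | some (Sum.inr A) ∉ U}, A.1).Finite)

def XTop : TopologicalSpace (Pt 𝒜) where
  IsOpen := XOpen 𝒜
  isOpen_univ := by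
    constructor
    · intro A _
      simp
    · intro _
      constructor
      · simp
      · simp
  isOpen_inter := by
    rintro U V ⟨hU1, hU2⟩ ⟨hV1, hV2⟩
    constructor
    · intro A hA
      refine ((hU1 A hA.1).union (hV1 A hA.2)).subset ?_
      intro n hn
      simp only [Set.mem_inter_iff, Set.mem_setOf_eq, not_and] at hn ⊢
      rcases Classical.em (some (Sum.inl n) ∈ U) with h | h
      · exact Or.inr ⟨hn.1, fun hV => hn.2 ⟨h, hV⟩⟩
      · exact Or.inl ⟨hn.1, h⟩
    · rintro ⟨h1, h2⟩
      obtain ⟨hUb, hUs⟩ := hU2 h1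
      obtain ⟨hVb, hVs⟩ := hV2 h2
      constructor
      · refine (hUb.union hVb).subset ?_
        intro A hA
        simp only [Set.mem_setOf_eq, Set.mem_union, Set.mem_inter_iff, not_and] at hA ⊢
        rcases Classical.em (some (Sum.inr A) ∈ U) with h | h
        · exact Or.inr (hA h)
        · exact Or.inl h
      · refine (hUs.union hVs).subset ?_
        intro n hn
        simp only [Set.mem_diff, Set.mem_setOf_eq, Set.mem_inter_iff, not_and,
          Set.mem_iUnion, not_exists, Set.mem_union] at hn ⊢
        obtain ⟨hn1, hn2⟩ := hn
        rcases Classical.em (some (Sum.inl n) ∈ U) with h | h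
        · refine Or.inr ⟨hn1 h, fun A hA hmem => ?_⟩
          exact hn2 A (fun hAU => hA) hmem
        · refine Or.inl ⟨h, fun A hA hmem => ?_⟩
          exact hn2 A (fun hAU => absurd hAU hA) hmem
  isOpen_sUnion := by
    intro S hS
    constructor
    · rintro A ⟨U, hUS, hAU⟩
      refine ((hS U hUS).1 A hAU).subset ?_
      intro n hn
      exact ⟨hn.1, fun hmem => hn.2 ⟨U, hUS, hmem⟩⟩
    · rintro ⟨U₀, hU₀S, hnone⟩
      obtain ⟨hbad, hleft⟩ := (hS U₀ hU₀S).2 hnone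
      constructor
      · refine hbad.subset ?_
        intro A hA
        exact fun hmem => hA ⟨U₀, hU₀S, hmem⟩
      · have hbig : {n : ℕ | some (Sum.inl n) ∉ ⋃₀ S} \
            (⋃ A ∈ {A : {A // A ∈ 𝒜} | some (Sum.inr A) ∉ ⋃₀ S}, A.1) ⊆
            (({n : ℕ | some (Sum.inl n) ∉ U₀} \
              ⋃ A ∈ {A : {A // A ∈ 𝒜} | some (Sum.inr A) ∉ U₀}, A.1) ∪
            ⋃ A ∈ {A : {A // A ∈ 𝒜} | some (Sum.inr A) ∉ U₀ ∧ some (Sum.inr A) ∈ ⋃₀ S},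
              (A.1 ∩ {n : ℕ | some (Sum.inl n) ∉ ⋃₀ S})) := by
          intro n hn
          simp only [Set.mem_diff, Set.mem_setOf_eq, Set.mem_iUnion, not_exists] at hn
          obtain ⟨hn1, hn2⟩ := hn
          have hnU₀ : some (Sum.inl n) ∉ U₀ := fun h => hn1 ⟨U₀, hU₀S, h⟩
          by_cases hc : ∃ A : {A // A ∈ 𝒜}, some (Sum.inr A) ∉ U₀ ∧ n ∈ A.1
          · obtain ⟨A, hA1, hA2⟩ := hc
            have hAS : some (Sum.inr A) ∈ ⋃₀ S := by
              by_contra hAS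
              exact hn2 A hAS hA2
            exact Or.inr (Set.mem_biUnion ⟨hA1, hAS⟩ ⟨hA2, hn1⟩)
          · push_neg at hc
            refine Or.inl ⟨hnU₀, ?_⟩
            simp only [Set.mem_iUnion, not_exists]
            intro A hA hmem
            exact hc A hA hmem
        refine (Set.Finite.union hleft ?_).subset hbig
        refine Set.Finite.biUnion (hbad.subset (fun A hA => hA.1)) ?_
        rintro A ⟨hA1, hA2⟩
        obtain ⟨U, hUS, hAU⟩ := hA2
        refine ((hS U hUS).1 A hAU).subset ?_
        intro n hn
        exact ⟨hn.1, fun h => hn.2 ⟨U, hUS, h⟩⟩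

lemma xIsOpen_iff {U : Set (Pt 𝒜)} : @IsOpen (Pt 𝒜) (XTop 𝒜) U ↔ XOpen 𝒜 U := Iff.rfl

/-- Singletons of natural points are open. -/
lemma xopen_nat (n : ℕ) : XOpen 𝒜 {some (Sum.inl n)} := by
  constructor
  · intro A hA
    simp at hA
  · intro h
    simp at h

/-- Basic neighborhoods of the point `A`. -/
lemma xopen_pa (A : {A // A ∈ 𝒜}) (G : Set ℕ) (hG : G.Finite) :
    XOpen 𝒜 ({some (Sum.inr A)} ∪ (fun n : ℕ => some (Sum.inl n)) '' (A.1 \ G)) := by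
  constructor
  · intro A' hA'
    rcases hA' with hA' | hA'
    · simp only [Set.mem_singleton_iff, Option.some_inj, Sum.inr.injEq] at hA'
      subst hA'
      refine hG.subset ?_
      intro n hn
      simp only [Set.mem_diff, Set.mem_setOf_eq, Set.mem_union, Set.mem_singleton_iff,
        Set.mem_image] at hn
      rcases Classical.em (n ∈ G) with h | h
      · exact h
      · exact absurd (Or.inr ⟨n, ⟨hn.1, h⟩, rfl⟩) hn.2
    · simp only [Set.mem_image] at hA'
      obtain ⟨n, _, hn⟩ := hA'
      exact absurd hn (by simp)
  · intro h
    rcases h with h | h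
    · simp at h
    · simp only [Set.mem_image] at h
      obtain ⟨n, _, hn⟩ := h
      exact absurd hn (by simp)

/-- The complement of a basic `A`-neighborhood is open (needs almost disjointness). -/
lemma xopen_conull (had : ∀ A ∈ 𝒜, ∀ A' ∈ 𝒜, A ≠ A' → (A ∩ A').Finite)
    (A : {A // A ∈ 𝒜}) :
    XOpen 𝒜 (({some (Sum.inr A)} ∪ (fun n : ℕ => some (Sum.inl n)) '' A.1)ᶜ) := by
  constructor
  · intro A' hA'
    simp only [Set.mem_compl_iff, Set.mem_union, Set.mem_singleton_iff, Set.mem_image,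
      not_or, Option.some_inj, Sum.inr.injEq, not_exists] at hA'
    have hne : A' ≠ A := fun h => hA'.1 (by rw [h])
    have hfin : (A'.1 ∩ A.1).Finite :=
      had A'.1 A'.2 A.1 A.2 (fun h => hne (Subtype.ext h))
    refine hfin.subset ?_
    intro n hn
    simp only [Set.mem_diff, Set.mem_setOf_eq, Set.mem_compl_iff, Set.mem_union,
      Set.mem_singleton_iff, Set.mem_image, not_or, not_forall, not_not] at hn
    obtain ⟨hn1, hn2⟩ := hn
    rcases Classical.em (n ∈ A.1) with h | h
    · exact ⟨hn1, h⟩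
    · exfalso
      apply hn2
      constructor
      · simp
      · rintro ⟨m, hm, hmeq⟩
        simp only [Option.some_inj, Sum.inl.injEq] at hmeq
        subst hmeq
        exact h hm
  · intro _
    have hbad : {A' : {A // A ∈ 𝒜} | some (Sum.inr A') ∉
        (({some (Sum.inr A)} ∪ (fun n : ℕ => some (Sum.inl n)) '' A.1)ᶜ)} ⊆ {A} := by
      intro A' hA'
      simp only [Set.mem_setOf_eq, Set.not_notMem, Set.mem_compl_iff, not_not,
        Set.mem_union, Set.mem_singleton_iff, Set.mem_image, Option.some_inj,
        Sum.inr.injEq] at hA'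
      rcases hA' with h | ⟨n, _, h⟩
      · simpa using h
      · exact absurd h (by simp)
    constructor
    · exact (Set.finite_singleton A).subset hbad
    · refine Set.Finite.subset (Set.finite_empty) ?_
      intro n hn
      simp only [Set.mem_diff, Set.mem_setOf_eq, Set.mem_compl_iff, not_not,
        Set.mem_union, Set.mem_singleton_iff, Set.mem_image, Set.mem_iUnion,
        not_exists] at hn
      obtain ⟨hn1, hn2⟩ := hn
      rcases hn1 with h | ⟨m, hm, hmeq⟩
      · exact absurd h (by simp)
      · simp only [Option.some_inj, Sum.inl.injEq] at hmeq
        subst hmeq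
        exact absurd hm (hn2 A (by simp))

/-- The complement of a natural singleton is open. -/
lemma xopen_compl_nat (n : ℕ) : XOpen 𝒜 ({(some (Sum.inl n) : Pt 𝒜)}ᶜ) := by
  constructor
  · intro A _
    refine (Set.finite_singleton n).subset ?_
    intro m hm
    simp only [Set.mem_diff, Set.mem_setOf_eq, Set.mem_compl_iff, not_not,
      Set.mem_singleton_iff, Option.some_inj, Sum.inl.injEq] at hm
    exact Set.mem_singleton_iff.mpr hm.2
  · intro _
    constructor
    · refine (Set.finite_empty).subset ?_
      intro A hA
      simp at hA
    · refine (Set.finite_singleton n).subset ?_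
      intro m hm
      simp only [Set.mem_diff, Set.mem_setOf_eq, Set.mem_compl_iff, not_not,
        Set.mem_singleton_iff, Option.some_inj, Sum.inl.injEq] at hm
      exact Set.mem_singleton_iff.mpr hm.1

/-- The space is compact. -/
lemma xCompact : @CompactSpace (Pt 𝒜) (XTop 𝒜) := by
  classical
  letI : TopologicalSpace (Pt 𝒜) := XTop 𝒜
  constructor
  apply isCompact_of_finite_subcover
  intro ix U hopen hcov
  obtain ⟨i₀, hi₀⟩ : ∃ i, (none : Pt 𝒜) ∈ U i := by
    have := hcov (Set.mem_univ (none : Pt 𝒜))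
    simpa using this
  obtain ⟨hbadfin, hLfin⟩ := (hopen i₀).2 hi₀
  set bad := {A : {A // A ∈ 𝒜} | some (Sum.inr A) ∉ U i₀} with hbaddef
  set L := {n : ℕ | some (Sum.inl n) ∉ U i₀} \ ⋃ A ∈ bad, A.1 with hLdef
  have hpick : ∀ x : Pt 𝒜, ∃ i, x ∈ U i := fun x => by
    have := hcov (Set.mem_univ x); simpa using this
  choose pk hpk using hpick
  set FA : {A // A ∈ 𝒜} → Set ℕ :=
    fun A => A.1 \ {n : ℕ | some (Sum.inl n) ∈ U (pk (some (Sum.inr A)))} with hFAdef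
  have hFAfin : ∀ A, (FA A).Finite :=
    fun A => (hopen (pk (some (Sum.inr A)))).1 A (hpk _)
  set NN : Set ℕ := L ∪ ⋃ A ∈ bad, FA A with hNNdef
  have hNNfin : NN.Finite := hLfin.union (hbadfin.biUnion (fun A _ => hFAfin A))
  refine ⟨{i₀} ∪ hbadfin.toFinset.image (fun A => pk (some (Sum.inr A))) ∪
    hNNfin.toFinset.image (fun n => pk (some (Sum.inl n))), fun x _ => ?_⟩
  have hmem : ∀ {i : ix}, i ∈ ({i₀} ∪ hbadfin.toFinset.image (fun A => pk (some (Sum.inr A))) ∪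
      hNNfin.toFinset.image (fun n => pk (some (Sum.inl n))) : Finset ix) →
      x ∈ U i → x ∈ ⋃ i ∈ ({i₀} ∪ hbadfin.toFinset.image (fun A => pk (some (Sum.inr A))) ∪
      hNNfin.toFinset.image (fun n => pk (some (Sum.inl n))) : Finset ix), U i :=
    fun hi hx => Set.mem_biUnion hi hx
  match x with
  | none =>
    exact hmem (by simp) hi₀
  | some (Sum.inr A) =>
    by_cases hc : some (Sum.inr A) ∈ U i₀
    · exact hmem (by simp) hc
    · refine hmem ?_ (hpk (some (Sum.inr A)))
      simp only [Finset.mem_union, Finset.mem_image, Finset.mem_singleton]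
      exact Or.inl (Or.inr ⟨A, by simp [hbaddef, hc], rfl⟩)
  | some (Sum.inl n) =>
    by_cases hc : some (Sum.inl n) ∈ U i₀
    · exact hmem (by simp) hc
    · by_cases hc2 : n ∈ ⋃ A ∈ bad, A.1
      · simp only [Set.mem_iUnion] at hc2
        obtain ⟨A, hA, hnA⟩ := hc2
        by_cases hc3 : some (Sum.inl n) ∈ U (pk (some (Sum.inr A)))
        · refine hmem ?_ hc3
          simp only [Finset.mem_union, Finset.mem_image, Set.Finite.mem_toFinset]
          exact Or.inl (Or.inr ⟨A, hA, rfl⟩)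
        · have hnn : n ∈ NN := Set.mem_union_right _ (Set.mem_biUnion hA ⟨hnA, hc3⟩)
          refine hmem ?_ (hpk (some (Sum.inl n)))
          simp only [Finset.mem_union, Finset.mem_image, Set.Finite.mem_toFinset]
          exact Or.inr ⟨n, hnn, rfl⟩
      · have hnn : n ∈ NN := Set.mem_union_left _ ⟨hc, hc2⟩
        refine hmem ?_ (hpk (some (Sum.inl n)))
        simp only [Finset.mem_union, Finset.mem_image, Set.Finite.mem_toFinset]
        exact Or.inr ⟨n, hnn, rfl⟩

end KS

namespace KS

variable {𝒜 : Set (Set ℕ)}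

lemma exists_nat_mem (hmeminf : ∀ A ∈ 𝒜, A.Infinite) {U : Set (Pt 𝒜)} (hU : XOpen 𝒜 U)
    (A : {A // A ∈ 𝒜}) (hA : some (Sum.inr A) ∈ U) : ∃ n, some (Sum.inl n) ∈ U := by
  have h1 := hU.1 A hA
  have h2 : (A.1 \ (A.1 \ {n : ℕ | some (Sum.inl n) ∈ U})).Infinite :=
    (hmeminf A.1 A.2).diff h1
  obtain ⟨n, hn⟩ := h2.nonempty
  exact ⟨n, by_contra fun h => hn.2 ⟨hn.1, h⟩⟩

lemma xT2 (had : ∀ A ∈ 𝒜, ∀ A' ∈ 𝒜, A ≠ A' → (A ∩ A').Finite) :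
    @T2Space (Pt 𝒜) (XTop 𝒜) := by
  letI : TopologicalSpace (Pt 𝒜) := XTop 𝒜
  have hsymm : ∀ x y : Pt 𝒜,
      (∃ u v : Set (Pt 𝒜), IsOpen u ∧ IsOpen v ∧ x ∈ u ∧ y ∈ v ∧ Disjoint u v) →
      (∃ u v : Set (Pt 𝒜), IsOpen u ∧ IsOpen v ∧ y ∈ u ∧ x ∈ v ∧ Disjoint u v) := by
    rintro x y ⟨u, v, h1, h2, h3, h4, h5⟩
    exact ⟨v, u, h2, h1, h4, h3, h5.symm⟩
  have keyNatPa : ∀ (n : ℕ) (A : {A // A ∈ 𝒜}),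
      ∃ u v : Set (Pt 𝒜), IsOpen u ∧ IsOpen v ∧
        (some (Sum.inl n) : Pt 𝒜) ∈ u ∧ (some (Sum.inr A) : Pt 𝒜) ∈ v ∧ Disjoint u v := by
    intro n A
    refine ⟨{some (Sum.inl n)}, {some (Sum.inr A)} ∪
      (fun m : ℕ => some (Sum.inl m)) '' (A.1 \ {n}), xopen_nat 𝒜 n,
      xopen_pa 𝒜 A {n} (Set.finite_singleton n), rfl, Or.inl rfl, ?_⟩
    rw [Set.disjoint_left]
    rintro p hp (hq | ⟨m, hm, hq⟩)
    · rw [Set.mem_singleton_iff] at hp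
      subst hp
      simp at hq
    · rw [Set.mem_singleton_iff] at hp
      subst hp
      simp only [Option.some_inj, Sum.inl.injEq] at hq
      subst hq
      exact hm.2 rfl
  have keyNatInf : ∀ n : ℕ,
      ∃ u v : Set (Pt 𝒜), IsOpen u ∧ IsOpen v ∧
        (some (Sum.inl n) : Pt 𝒜) ∈ u ∧ (none : Pt 𝒜) ∈ v ∧ Disjoint u v := by
    intro n
    refine ⟨{some (Sum.inl n)}, {(some (Sum.inl n) : Pt 𝒜)}ᶜ, xopen_nat 𝒜 n,
      xopen_compl_nat 𝒜 n, rfl, by simp, ?_⟩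
    rw [Set.disjoint_left]
    intro p hp hq
    exact hq hp
  have keyPaInf : ∀ A : {A // A ∈ 𝒜},
      ∃ u v : Set (Pt 𝒜), IsOpen u ∧ IsOpen v ∧
        (some (Sum.inr A) : Pt 𝒜) ∈ u ∧ (none : Pt 𝒜) ∈ v ∧ Disjoint u v := by
    intro A
    refine ⟨{some (Sum.inr A)} ∪ (fun m : ℕ => some (Sum.inl m)) '' (A.1 \ ∅),
      ({some (Sum.inr A)} ∪ (fun m : ℕ => some (Sum.inl m)) '' A.1)ᶜ,
      xopen_pa 𝒜 A ∅ Set.finite_empty, xopen_conull 𝒜 had A, Or.inl rfl, ?_, ?_⟩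
    · simp only [Set.mem_compl_iff, Set.mem_union, Set.mem_singleton_iff, Set.mem_image]
      push_neg
      exact ⟨by simp, fun m _ => by simp⟩
    · rw [Set.disjoint_left]
      rintro p (hp | ⟨m, hm, hp⟩) hq
      · exact hq (Or.inl hp)
      · exact hq (Or.inr ⟨m, hm.1, hp⟩)
  constructor
  intro x y hxy
  match x, y with
  | some (Sum.inl n), some (Sum.inl m) =>
    have hnm : n ≠ m := fun h => hxy (by rw [h])
    refine ⟨{some (Sum.inl n)}, {some (Sum.inl m)}, xopen_nat 𝒜 n, xopen_nat 𝒜 m, rfl, rfl, ?_⟩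
    rw [Set.disjoint_left]
    intro p hp hq
    rw [Set.mem_singleton_iff] at hp hq
    subst hp
    simp only [Option.some_inj, Sum.inl.injEq] at hq
    exact hnm hq
  | some (Sum.inl n), some (Sum.inr A) => exact keyNatPa n A
  | some (Sum.inl n), none => exact keyNatInf n
  | some (Sum.inr A), some (Sum.inl n) => exact hsymm _ _ (keyNatPa n A)
  | some (Sum.inr A), some (Sum.inr A') =>
    have hAA : A ≠ A' := fun h => hxy (by rw [h])
    have hGfin : (A.1 ∩ A'.1).Finite :=
      had A.1 A.2 A'.1 A'.2 (fun h => hAA (Subtype.ext h))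
    refine ⟨{some (Sum.inr A)} ∪ (fun m : ℕ => some (Sum.inl m)) '' (A.1 \ (A.1 ∩ A'.1)),
      {some (Sum.inr A')} ∪ (fun m : ℕ => some (Sum.inl m)) '' (A'.1 \ (A.1 ∩ A'.1)),
      xopen_pa 𝒜 A _ hGfin, xopen_pa 𝒜 A' _ hGfin, Or.inl rfl, Or.inl rfl, ?_⟩
    rw [Set.disjoint_left]
    rintro p (hp | ⟨m, hm, hp⟩) (hq | hq)
    · rw [Set.mem_singleton_iff] at hp
      subst hp
      rw [Set.mem_singleton_iff] at hq
      simp only [Option.some_inj, Sum.inr.injEq] at hq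
      exact hAA hq
    · rw [Set.mem_singleton_iff] at hp
      subst hp
      obtain ⟨m, _, hq⟩ := hq
      simp at hq
    · subst hp
      rw [Set.mem_singleton_iff] at hq
      simp at hq
    · subst hp
      obtain ⟨m', hm', hq⟩ := hq
      simp only [Option.some_inj, Sum.inl.injEq] at hq
      subst hq
      exact hm'.2 ⟨hm.1, hm'.1⟩
  | some (Sum.inr A), none => exact keyPaInf A
  | none, some (Sum.inl n) => exact hsymm _ _ (keyNatInf n)
  | none, some (Sum.inr A) => exact hsymm _ _ (keyPaInf A)
  | none, none => exact absurd rfl hxy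

lemma xSep (hinf : 𝒜.Infinite) (hmeminf : ∀ A ∈ 𝒜, A.Infinite) :
    @TopologicalSpace.SeparableSpace (Pt 𝒜) (XTop 𝒜) := by
  letI : TopologicalSpace (Pt 𝒜) := XTop 𝒜
  refine ⟨⟨Set.range (fun n : ℕ => (some (Sum.inl n) : Pt 𝒜)), Set.countable_range _, ?_⟩⟩
  rw [dense_iff_inter_open]
  rintro U hU ⟨x, hx⟩
  have hgoal : (∃ n, some (Sum.inl n) ∈ U) → (U ∩ Set.range fun n : ℕ =>
      (some (Sum.inl n) : Pt 𝒜)).Nonempty := by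
    rintro ⟨n, hn⟩
    exact ⟨some (Sum.inl n), hn, n, rfl⟩
  match x with
  | some (Sum.inl n) => exact hgoal ⟨n, hx⟩
  | some (Sum.inr A) => exact hgoal (exists_nat_mem hmeminf hU A hx)
  | none =>
    obtain ⟨hbadfin, _⟩ := hU.2 hx
    have hA : ∃ A : {A // A ∈ 𝒜}, some (Sum.inr A) ∈ U := by
      by_contra h
      push_neg at h
      have huniv : {A : {A // A ∈ 𝒜} | some (Sum.inr A) ∉ U} = Set.univ :=
        Set.eq_univ_of_forall (fun A => h A)
      rw [huniv] at hbadfin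
      have : Infinite {A // A ∈ 𝒜} := Set.infinite_coe_iff.mpr hinf
      exact Set.infinite_univ hbadfin
    obtain ⟨A, hA⟩ := hA
    exact hgoal (exists_nat_mem hmeminf hU A hA)

end KS

namespace KS

lemma xVdW (hne : 𝒜.Nonempty)
    (hcatch : ∀ (g : ℕ → ℕ) (C : Set ℕ), IsAPSet C → FinToOneOn g C →
      ∃ A ∈ 𝒜, IsAPSet {n ∈ C | g n ∈ A}) :
    @IsVanDerWaerdenSpace (Pt 𝒜) (XTop 𝒜) := by
  classical
  letI : TopologicalSpace (Pt 𝒜) := XTop 𝒜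
  intro x
  obtain ⟨i, hi⟩ := exists_isAPSet_of_cover (A := Set.univ) (fun i : Fin 3 => match i with
    | 0 => {n | ∃ m, x n = some (Sum.inl m)}
    | 1 => {n | ∃ A, x n = some (Sum.inr A)}
    | 2 => {n | x n = none}) isAPSet_univ (fun n _ => by
      match hxn : x n with
      | some (Sum.inl m) => exact ⟨0, m, hxn⟩
      | some (Sum.inr A) => exact ⟨1, A, hxn⟩
      | none => exact ⟨2, hxn⟩)
  match i with
  | 2 =>
    refine ⟨_, hi, none, fun U hU => ?_⟩
    refine Set.finite_empty.subset ?_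
    rintro n ⟨hn1, hn2⟩
    have hxn : x n = none := hn1
    exact absurd (show x n ∈ U from by rw [hxn]; exact mem_of_mem_nhds hU) hn2
  | 0 =>
    set g : ℕ → ℕ := fun n => match x n with
      | some (Sum.inl m) => m
      | _ => 0 with hg
    have hgx : ∀ n m, x n = some (Sum.inl m) → g n = m := by
      intro n m h
      simp only [hg, h]
    by_cases hfib : ∃ m, IsAPSet {n ∈ {n | ∃ m, x n = some (Sum.inl m)} |
        x n = some (Sum.inl m)}
    · obtain ⟨m, hm⟩ := hfib
      refine ⟨_, hm, some (Sum.inl m), fun U hU => ?_⟩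
      refine Set.finite_empty.subset ?_
      rintro n ⟨⟨_, hn1⟩, hn2⟩
      exact absurd (show x n ∈ U from by rw [hn1]; exact mem_of_mem_nhds hU) hn2
    · push_neg at hfib
      obtain ⟨C, hCS, hCAP, hCfin⟩ := selective hi
        (fun m => {n ∈ {n | ∃ m, x n = some (Sum.inl m)} | x n = some (Sum.inl m)}) hfib
      have hxg : ∀ n ∈ C, x n = some (Sum.inl (g n)) := by
        intro n hn
        obtain ⟨m', hm'⟩ := hCS hn
        rw [hm', hgx n m' hm']
      have hgC : FinToOneOn g C := by
        intro m
        refine (hCfin m).subset ?_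
        rintro n ⟨hnC, hnm⟩
        rw [Set.mem_preimage, Set.mem_singleton_iff] at hnm
        refine ⟨hnC, hCS hnC, ?_⟩
        rw [hxg n hnC, hnm]
      obtain ⟨A, hA𝒜, hAcatch⟩ := hcatch g C hCAP hgC
      refine ⟨_, hAcatch, some (Sum.inr ⟨A, hA𝒜⟩), fun U hU => ?_⟩
      obtain ⟨V, hVU, hVopen, hqV⟩ := mem_nhds_iff.mp hU
      have hVfin := hVopen.1 ⟨A, hA𝒜⟩ hqV
      refine ((hVfin.biUnion (fun m _ => hgC m)).subset ?_)
      rintro n ⟨⟨hnC, hngA⟩, hnU⟩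
      refine Set.mem_biUnion (show g n ∈ A \ {m : ℕ | some (Sum.inl m) ∈ V} from ?_)
        (show n ∈ C ∩ g ⁻¹' {g n} from ⟨hnC, rfl⟩)
      refine ⟨hngA, fun hmem => hnU (hVU ?_)⟩
      rw [hxg n hnC]
      exact hmem
  | 1 =>
    set D : {A // A ∈ 𝒜} := ⟨hne.choose, hne.choose_spec⟩ with hD
    set vf : ℕ → {A // A ∈ 𝒜} := fun n => match x n with
      | some (Sum.inr A) => A
      | _ => D with hvf
    have hvfx : ∀ n A, x n = some (Sum.inr A) → vf n = A := by
      intro n A h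
      simp only [hvf, h]
    obtain ⟨q', hq'⟩ := (Set.countable_range vf).exists_eq_range ⟨vf 0, 0, rfl⟩
    have hxvf : ∀ n, (∃ A, x n = some (Sum.inr A)) → x n = some (Sum.inr (vf n)) := by
      rintro n ⟨A, hA⟩
      rw [hA, hvfx n A hA]
    by_cases hfib : ∃ k, IsAPSet {n ∈ {n | ∃ A, x n = some (Sum.inr A)} | vf n = q' k}
    · obtain ⟨k, hk⟩ := hfib
      refine ⟨_, hk, some (Sum.inr (q' k)), fun U hU => ?_⟩
      refine Set.finite_empty.subset ?_
      rintro n ⟨⟨hn1, hn2⟩, hn3⟩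
      have : x n = some (Sum.inr (q' k)) := by rw [hxvf n hn1, hn2]
      exact absurd (show x n ∈ U from by rw [this]; exact mem_of_mem_nhds hU) hn3
    · push_neg at hfib
      obtain ⟨C, hCS, hCAP, hCfin⟩ := selective hi
        (fun k => {n ∈ {n | ∃ A, x n = some (Sum.inr A)} | vf n = q' k}) hfib
      refine ⟨C, hCAP, none, fun U hU => ?_⟩
      obtain ⟨V, hVU, hVopen, hqV⟩ := mem_nhds_iff.mp hU
      obtain ⟨hbadfin, _⟩ := hVopen.2 hqV
      have hsub : {n ∈ C | x n ∉ U} ⊆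
          ⋃ A ∈ {A : {A // A ∈ 𝒜} | some (Sum.inr A) ∉ V}, {n ∈ C | vf n = A} := by
        rintro n ⟨hnC, hnU⟩
        refine Set.mem_biUnion (show some (Sum.inr (vf n)) ∉ V from ?_)
          (show n ∈ {n ∈ C | vf n = vf n} from ⟨hnC, rfl⟩)
        intro hmem
        exact hnU (hVU (by rw [hxvf n (hCS hnC)]; exact hmem))
      refine (hbadfin.biUnion (fun A _ => ?_)).subset hsub
      by_cases hrange : A ∈ Set.range vf
      · rw [hq'] at hrange
        obtain ⟨k, rfl⟩ := hrange
        refine (hCfin k).subset ?_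
        rintro n ⟨hnC, hnvf⟩
        exact ⟨hnC, hCS hnC, hnvf⟩
      · refine Set.finite_empty.subset ?_
        rintro n ⟨hnC, hnvf⟩
        exact hrange ⟨n, hnvf⟩

lemma xNotHindman (had : ∀ A ∈ 𝒜, ∀ A' ∈ 𝒜, A ≠ A' → (A ∩ A').Finite)
    (hnip : ∀ A ∈ 𝒜, ¬ IsIPSet A)
    (hmad : ∀ S : Set ℕ, S.Infinite → ∃ A ∈ 𝒜, (S ∩ A).Infinite) :
    ¬ @IsHindmanSpace (Pt 𝒜) (XTop 𝒜) := by
  classical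
  letI : TopologicalSpace (Pt 𝒜) := XTop 𝒜
  have hopen : ∀ {U : Set (Pt 𝒜)}, XOpen 𝒜 U → IsOpen U := fun h => h
  intro h
  obtain ⟨B, hBinf, q, hq⟩ := h (fun n => some (Sum.inl n))
  have hIiofin : ∀ n₀ : ℕ, ({k : ℕ | k < n₀}).Finite := fun n₀ => Set.finite_Iio n₀
  match q with
  | some (Sum.inl m) =>
    obtain ⟨n₀, hn₀⟩ := hq {some (Sum.inl m)}
      ((hopen (xopen_nat 𝒜 m)).mem_nhds rfl)
    have hB' : (B \ {k | k < n₀}).Infinite := hBinf.diff (hIiofin n₀)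
    obtain ⟨b₁, hb₁⟩ := hB'.nonempty
    obtain ⟨b₂, hb₂, hlt⟩ := hB'.exists_gt b₁
    have h₁ := hn₀ b₁ (mem_FS_single hb₁)
    have h₂ := hn₀ b₂ (mem_FS_single hb₂)
    rw [Set.mem_singleton_iff] at h₁ h₂
    simp only [Option.some_inj, Sum.inl.injEq] at h₁ h₂
    omega
  | some (Sum.inr A) =>
    obtain ⟨n₀, hn₀⟩ := hq ({some (Sum.inr A)} ∪
        (fun n : ℕ => some (Sum.inl n)) '' (A.1 \ ∅))
      ((hopen (xopen_pa 𝒜 A ∅ Set.finite_empty)).mem_nhds (Or.inl rfl))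
    refine hnip A.1 A.2 ⟨B \ {k | k < n₀}, hBinf.diff (hIiofin n₀), ?_⟩
    intro m hm
    have := hn₀ m hm
    rcases this with hc | ⟨m', hm', hc⟩
    · exact absurd hc (by simp)
    · simp only [Option.some_inj, Sum.inl.injEq] at hc
      subst hc
      exact hm'.1
  | none =>
    obtain ⟨A, hA𝒜, hABinf⟩ := hmad B hBinf
    obtain ⟨n₀, hn₀⟩ := hq (({some (Sum.inr ⟨A, hA𝒜⟩)} ∪
        (fun n : ℕ => some (Sum.inl n)) '' A)ᶜ)
      ((hopen (xopen_conull 𝒜 had ⟨A, hA𝒜⟩)).mem_nhds (by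
        simp only [Set.mem_compl_iff, Set.mem_union, Set.mem_singleton_iff, Set.mem_image]
        push_neg
        exact ⟨by simp, fun m _ => by simp⟩))
    obtain ⟨b, hb, hbge⟩ := hABinf.exists_gt n₀
    have hbFS : b ∈ FS (B \ {k | k < n₀}) :=
      mem_FS_single ⟨hb.1, by simp only [Set.mem_setOf_eq]; omega⟩
    have := hn₀ b hbFS
    exact this (Or.inr ⟨b, hb.2, rfl⟩)

end KS

/-- Under CH there is a compact separable Hausdorff van der Waerden space
which is not Hindman. -/
theorem exists_vdW_not_Hindman (ch : ContinuumHypothesis) :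
    ∃ (X : Type) (_ : TopologicalSpace X),
      CompactSpace X ∧ TopologicalSpace.SeparableSpace X ∧ T2Space X ∧
      IsVanDerWaerdenSpace X ∧ ¬ IsHindmanSpace X := by
  classical
  obtain ⟨𝒜, hinf, hmeminf, hnip, had, hmad, hcatch⟩ := KS.exists_good_family ch
  exact ⟨KS.Pt 𝒜, KS.XTop 𝒜, KS.xCompact 𝒜, KS.xSep hinf hmeminf, KS.xT2 had,
    KS.xVdW hinf.nonempty hcatch, KS.xNotHindman had hnip hmad⟩
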